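/- Fix a nonempty set U and a predicate type π. The bijection τ_π : ⟦π⟧*_U → (⟦π⟧_U)^c commutes with the lattice operations: (1) for every subset S ⊆ ⟦π⟧*_U, τ_π of the ≤_π-supremum of S equals the componentwise supremum of τ_π(S) in (⟦π⟧_U)^c; (2) for every subset S ⊆ ⟦π⟧*_U, τ_π of the ≤_π-infimum of S equals the componentwise infimum of τ_π(S); (3) for every nonempty subset S ⊆ ⟦π⟧*_U, τ_π of the ≼_π-greatest lower bound of S equals the ≼-greatest lower bound of τ_π(S) in (⟦π⟧_U)^c, namely the pair (infimum of the first components of τ_π(S), supremum of the second components of τ_π(S)). -/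
import Mathlib


/-- The three-valued truth domain: false, undef, true. -/
inductive Three : Type where
  | fls : Three
  | undef : Three
  | tru : Three
deriving DecidableEq

def Three.toNat : Three → ℕ
  | .fls => 0
  | .undef => 1
  | .tru => 2

/-- Truth order on `Three`, induced by `fls < undef < tru`. -/
def Three.le (a b : Three) : Prop := a.toNat ≤ b.toNat

/-- Precision order on `Three`, induced by `undef ≺ fls` and `undef ≺ tru`. -/
def Three.prec (a b : Three) : Prop := a = .undef ∨ a = b

/-- Predicate types `π ::= o | ρ → π` where the argument `ρ` is either the
individual type `ι` (constructor `arrI`) or a predicate type (constructor `arrP`). -/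
inductive PTy : Type where
  | o : PTy
  | arrI : PTy → PTy
  | arrP : PTy → PTy → PTy

/-- Argument types `ρ ::= ι | π`. -/
inductive ATy : Type where
  | iota : ATy
  | pred : PTy → ATy

/-- Two-valued semantics of predicate types over base set `U`. -/
def sem2 (U : Type) : PTy → Type
  | .o => Bool
  | .arrI π => U → sem2 U π
  | .arrP ρ π => sem2 U ρ → sem2 U π

/-- Three-valued semantics: functions take *two-valued* arguments. -/
def sem3 (U : Type) : PTy → Type
  | .o => Three
  | .arrI π => U → sem3 U π
  | .arrP ρ π => sem2 U ρ → sem3 U π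

/-- Two-valued semantics of argument types. -/
def semA (U : Type) : ATy → Type
  | .iota => U
  | .pred π => sem2 U π

/-- Pointwise (truth) order on the two-valued domains. -/
def le2 (U : Type) : (π : PTy) → sem2 U π → sem2 U π → Prop
  | .o, a, b => @LE.le Bool _ a b
  | .arrI π, f, g => ∀ d : U, le2 U π (f d) (g d)
  | .arrP ρ π, f, g => ∀ d : sem2 U ρ, le2 U π (f d) (g d)

/-- Pointwise truth order on the three-valued domains. -/
def le3 (U : Type) : (π : PTy) → sem3 U π → sem3 U π → Prop
  | .o, a, b => Three.le a b
  | .arrI π, f, g => ∀ d : U, le3 U π (f d) (g d)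
  | .arrP ρ π, f, g => ∀ d : sem2 U ρ, le3 U π (f d) (g d)

/-- Pointwise precision order on the three-valued domains. -/
def prec3 (U : Type) : (π : PTy) → sem3 U π → sem3 U π → Prop
  | .o, a, b => Three.prec a b
  | .arrI π, f, g => ∀ d : U, prec3 U π (f d) (g d)
  | .arrP ρ π, f, g => ∀ d : sem2 U ρ, prec3 U π (f d) (g d)

/-- The everywhere-undefined element of the three-valued domain. -/
def undef3 (U : Type) : (π : PTy) → sem3 U π
  | .o => Three.undef
  | .arrI π => fun _ => undef3 U π
  | .arrP _ρ π => fun _ => undef3 U π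

def tauo : Three → Bool × Bool
  | .fls => (false, false)
  | .undef => (false, true)
  | .tru => (true, true)

/-- The map `τ_π` from the three-valued domain to pairs of two-valued elements. -/
def tau (U : Type) : (π : PTy) → sem3 U π → sem2 U π × sem2 U π
  | .o, a => tauo a
  | .arrI π, f => (fun d => (tau U π (f d)).1, fun d => (tau U π (f d)).2)
  | .arrP _ρ π, f => (fun d => (tau U π (f d)).1, fun d => (tau U π (f d)).2)

/-- The map `τ⁻¹_π` from pairs of two-valued elements to the three-valued domain
(on non-consistent pairs at base type its value is irrelevant junk). -/
def tauInv (U : Type) : (π : PTy) → sem2 U π → sem2 U π → sem3 U π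
  | .o, a, b => cond a (cond b Three.tru Three.undef) (cond b Three.undef Three.fls)
  | .arrI π, f, g => fun d => tauInv U π (f d) (g d)
  | .arrP _ρ π, f, g => fun d => tauInv U π (f d) (g d)

/-- The embedding `ε_π` of the two-valued domain into the three-valued one. -/
def eps (U : Type) : (π : PTy) → sem2 U π → sem3 U π
  | .o, b => cond b Three.tru Three.fls
  | .arrI π, f => fun d => eps U π (f d)
  | .arrP _ρ π, f => fun d => eps U π (f d)

/-- The order of a predicate type: `order(o) = 1`,
`order(ρ→π) = max (order ρ + 1) (order π)` with `order ι = 0`. -/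
def orderP : PTy → ℕ
  | .o => 1
  | .arrI π => max 1 (orderP π)
  | .arrP ρ π => max (orderP ρ + 1) (orderP π)

/-- The order of an argument type. -/
def orderA : ATy → ℕ
  | .iota => 0
  | .pred π => orderP π

/-- Iterated exponential: `expk 0 x = x`, `expk (k+1) x = 2 ^ expk k x`. -/
def expk : ℕ → ℕ → ℕ
  | 0, x => x
  | k+1, x => 2 ^ expk k x

/-- The product of the cardinalities of the argument domains of a predicate type. -/
noncomputable def argProd (U : Type) : PTy → ℕ
  | .o => 1
  | .arrI π => Nat.card U * argProd U π
  | .arrP ρ π => Nat.card (sem2 U ρ) * argProd U π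

/-- `s` is a least upper bound of `S` with respect to the relation `R`. -/
def IsLubR {α : Type _} (R : α → α → Prop) (S : Set α) (s : α) : Prop :=
  (∀ a ∈ S, R a s) ∧ ∀ b, (∀ a ∈ S, R a b) → R s b

/-- `s` is a greatest lower bound of `S` with respect to the relation `R`. -/
def IsGlbR {α : Type _} (R : α → α → Prop) (S : Set α) (s : α) : Prop :=
  (∀ a ∈ S, R s a) ∧ ∀ b, (∀ a ∈ S, R b a) → R b s

/-- The set of consistent pairs `L^c = {(x,y) ∈ L × L | x ≤ y}`. -/
def Lc (L : Type _) [CompleteLattice L] : Type _ := {p : L × L // p.1 ≤ p.2}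

/-- The precision order on consistent pairs: `(x,y) ≼ (x',y')` iff `x ≤ x'` and `y' ≤ y`. -/
def precPair {L : Type _} [CompleteLattice L] (a b : Lc L) : Prop :=
  a.1.1 ≤ b.1.1 ∧ b.1.2 ≤ a.1.2

section Aux

/-- Pointwise lub gives lub at each point. -/
lemma lub_pt {α D : Type _} (R : α → α → Prop) (S : Set (D → α)) (s : D → α)
    (h : IsLubR (fun f g => ∀ d, R (f d) (g d)) S s) (d : D) :
    IsLubR R ((fun f => f d) '' S) (s d) := by
  classical
  constructor
  · rintro a ⟨f, hf, rfl⟩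
    exact h.1 f hf d
  · intro b hb
    have ht : ∀ f ∈ S, ∀ e, R (f e) (if e = d then b else s e) := by
      intro f hf e
      by_cases he : e = d
      · subst he
        simpa using hb (f e) ⟨f, hf, rfl⟩
      · simpa [he] using h.1 f hf e
    simpa using h.2 _ ht d

lemma glb_pt {α D : Type _} (R : α → α → Prop) (S : Set (D → α)) (s : D → α)
    (h : IsGlbR (fun f g => ∀ d, R (f d) (g d)) S s) (d : D) :
    IsGlbR R ((fun f => f d) '' S) (s d) := by
  classical
  constructor
  · rintro a ⟨f, hf, rfl⟩
    exact h.1 f hf d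
  · intro b hb
    have ht : ∀ f ∈ S, ∀ e, R (if e = d then b else s e) (f e) := by
      intro f hf e
      by_cases he : e = d
      · subst he
        simpa using hb (f e) ⟨f, hf, rfl⟩
      · simpa [he] using h.1 f hf e
    simpa using h.2 _ ht d

lemma lub_assemble {α D : Type _} (R : α → α → Prop) (T : Set (D → α)) (c : D → α)
    (h : ∀ d, IsLubR R ((fun F => F d) '' T) (c d)) :
    IsLubR (fun f g => ∀ d, R (f d) (g d)) T c := by
  constructor
  · intro F hF d
    exact (h d).1 (F d) ⟨F, hF, rfl⟩
  · intro b hb d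
    exact (h d).2 (b d) (by rintro a ⟨F, hF, rfl⟩; exact hb F hF d)

lemma glb_assemble {α D : Type _} (R : α → α → Prop) (T : Set (D → α)) (c : D → α)
    (h : ∀ d, IsGlbR R ((fun F => F d) '' T) (c d)) :
    IsGlbR (fun f g => ∀ d, R (f d) (g d)) T c := by
  constructor
  · intro F hF d
    exact (h d).1 (F d) ⟨F, hF, rfl⟩
  · intro b hb d
    exact (h d).2 (b d) (by rintro a ⟨F, hF, rfl⟩; exact hb F hF d)

/-! Base case: facts about `Three` and `tauo`. -/

lemma t1_mono {a b : Three} (h : Three.le a b) : (tauo a).1 ≤ (tauo b).1 := by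
  cases a <;> cases b <;> simp_all [Three.le, Three.toNat, tauo]

lemma t2_mono {a b : Three} (h : Three.le a b) : (tauo a).2 ≤ (tauo b).2 := by
  cases a <;> cases b <;> simp_all [Three.le, Three.toNat, tauo]

lemma t1_false {a : Three} (h : (tauo a).1 = false) : Three.le a .undef := by
  cases a <;> simp_all [Three.le, Three.toNat, tauo]

lemma t2_false {a : Three} (h : (tauo a).2 = false) : Three.le a .fls := by
  cases a <;> simp_all [Three.le, Three.toNat, tauo]

lemma t1_true {a : Three} (h : (tauo a).1 = true) : Three.le .tru a := by
  cases a <;> simp_all [Three.le, Three.toNat, tauo]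

lemma t2_true {a : Three} (h : (tauo a).2 = true) : Three.le .undef a := by
  cases a <;> simp_all [Three.le, Three.toNat, tauo]

lemma o_lub (S : Set Three) (s : Three) (h : IsLubR Three.le S s) :
    IsLubR (· ≤ ·) ((fun a => (tauo a).1) '' S) (tauo s).1 ∧
    IsLubR (· ≤ ·) ((fun a => (tauo a).2) '' S) (tauo s).2 := by
  constructor
  · constructor
    · rintro x ⟨a, ha, rfl⟩
      exact t1_mono (h.1 a ha)
    · intro b hb
      cases hbv : b
      · have hub : ∀ a ∈ S, Three.le a .undef := by
          intro a ha
          exact t1_false (Bool.le_antisymm (hbv ▸ hb _ ⟨a, ha, rfl⟩) (Bool.false_le _))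
        have := h.2 _ hub
        cases s <;> simp_all [Three.le, Three.toNat, tauo]
      · exact Bool.le_true _
  · constructor
    · rintro x ⟨a, ha, rfl⟩
      exact t2_mono (h.1 a ha)
    · intro b hb
      cases hbv : b
      · have hub : ∀ a ∈ S, Three.le a .fls := by
          intro a ha
          exact t2_false (Bool.le_antisymm (hbv ▸ hb _ ⟨a, ha, rfl⟩) (Bool.false_le _))
        have := h.2 _ hub
        cases s <;> simp_all [Three.le, Three.toNat, tauo]
      · exact Bool.le_true _

lemma o_glb (S : Set Three) (s : Three) (h : IsGlbR Three.le S s) :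
    IsGlbR (· ≤ ·) ((fun a => (tauo a).1) '' S) (tauo s).1 ∧
    IsGlbR (· ≤ ·) ((fun a => (tauo a).2) '' S) (tauo s).2 := by
  constructor
  · constructor
    · rintro x ⟨a, ha, rfl⟩
      exact t1_mono (h.1 a ha)
    · intro b hb
      cases hbv : b
      · exact Bool.false_le _
      · have hlb : ∀ a ∈ S, Three.le .tru a := by
          intro a ha
          exact t1_true (Bool.le_antisymm (Bool.le_true _) (hbv ▸ hb _ ⟨a, ha, rfl⟩))
        have := h.2 _ hlb
        cases s <;> simp_all [Three.le, Three.toNat, tauo]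
  · constructor
    · rintro x ⟨a, ha, rfl⟩
      exact t2_mono (h.1 a ha)
    · intro b hb
      cases hbv : b
      · exact Bool.false_le _
      · have hlb : ∀ a ∈ S, Three.le .undef a := by
          intro a ha
          exact t2_true (Bool.le_antisymm (Bool.le_true _) (hbv ▸ hb _ ⟨a, ha, rfl⟩))
        have := h.2 _ hlb
        cases s <;> simp_all [Three.le, Three.toNat, tauo]

lemma o_prec (S : Set Three) (hne : S.Nonempty) (g : Three) (h : IsGlbR Three.prec S g) :
    IsGlbR (· ≤ ·) ((fun a => (tauo a).1) '' S) (tauo g).1 ∧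
    IsLubR (· ≤ ·) ((fun a => (tauo a).2) '' S) (tauo g).2 := by
  by_cases hg : g = .undef
  · subst hg
    constructor
    · constructor
      · rintro x ⟨a, ha, rfl⟩
        exact Bool.false_le _
      · intro b hb
        cases hbv : b
        · exact le_refl _
        · exfalso
          have hall : ∀ a ∈ S, a = Three.tru := by
            intro a ha
            have := Bool.le_antisymm (Bool.le_true _) (hbv ▸ hb _ ⟨a, ha, rfl⟩)
            cases a <;> simp_all [tauo]
          have hlb : ∀ a ∈ S, Three.prec .tru a := by
            intro a ha
            exact Or.inr (hall a ha).symm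
          have := h.2 _ hlb
          rcases this with h' | h' <;> exact absurd h' (by decide)
    · constructor
      · rintro x ⟨a, ha, rfl⟩
        exact Bool.le_true _
      · intro b hb
        cases hbv : b
        · exfalso
          have hall : ∀ a ∈ S, a = Three.fls := by
            intro a ha
            have := Bool.le_antisymm (hbv ▸ hb _ ⟨a, ha, rfl⟩) (Bool.false_le _)
            cases a <;> simp_all [tauo]
          have hlb : ∀ a ∈ S, Three.prec .fls a := by
            intro a ha
            exact Or.inr (hall a ha).symm
          have := h.2 _ hlb
          rcases this with h' | h' <;> exact absurd h' (by decide)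
        · exact le_refl _
  · have heq : ∀ a ∈ S, a = g := by
      intro a ha
      rcases h.1 a ha with h' | h'
      · exact absurd h' hg
      · exact h'.symm
    obtain ⟨a0, ha0⟩ := hne
    constructor
    · constructor
      · rintro x ⟨a, ha, rfl⟩
        rw [heq a ha]
      · intro b hb
        have := hb _ ⟨a0, ha0, rfl⟩
        rwa [heq a0 ha0] at this
    · constructor
      · rintro x ⟨a, ha, rfl⟩
        rw [heq a ha]
      · intro b hb
        have := hb _ ⟨a0, ha0, rfl⟩
        rwa [heq a0 ha0] at this

end Aux

section Arr
variable (U : Type)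

lemma arr_lub (π : PTy) (D : Type)
    (ih : ∀ (S : Set (sem3 U π)) (s : sem3 U π), IsLubR (le3 U π) S s →
      IsLubR (le2 U π) ((fun f => (tau U π f).1) '' S) (tau U π s).1 ∧
      IsLubR (le2 U π) ((fun f => (tau U π f).2) '' S) (tau U π s).2)
    (S : Set (D → sem3 U π)) (s : D → sem3 U π)
    (h : IsLubR (fun f g => ∀ d, le3 U π (f d) (g d)) S s) :
    IsLubR (fun f g => ∀ d, le2 U π (f d) (g d))
      ((fun f => fun d => (tau U π (f d)).1) '' S) (fun d => (tau U π (s d)).1) ∧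
    IsLubR (fun f g => ∀ d, le2 U π (f d) (g d))
      ((fun f => fun d => (tau U π (f d)).2) '' S) (fun d => (tau U π (s d)).2) := by
  have key : ∀ d, IsLubR (le2 U π) ((fun a => (tau U π a).1) '' ((fun f => f d) '' S))
      (tau U π (s d)).1 ∧ IsLubR (le2 U π) ((fun a => (tau U π a).2) '' ((fun f => f d) '' S))
      (tau U π (s d)).2 := fun d => ih _ _ (lub_pt _ S s h d)
  constructor
  · apply lub_assemble
    intro d
    have := (key d).1
    rw [Set.image_image] at this
    rw [Set.image_image]
    exact this
  · apply lub_assemble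
    intro d
    have := (key d).2
    rw [Set.image_image] at this
    rw [Set.image_image]
    exact this

lemma arr_glb (π : PTy) (D : Type)
    (ih : ∀ (S : Set (sem3 U π)) (s : sem3 U π), IsGlbR (le3 U π) S s →
      IsGlbR (le2 U π) ((fun f => (tau U π f).1) '' S) (tau U π s).1 ∧
      IsGlbR (le2 U π) ((fun f => (tau U π f).2) '' S) (tau U π s).2)
    (S : Set (D → sem3 U π)) (s : D → sem3 U π)
    (h : IsGlbR (fun f g => ∀ d, le3 U π (f d) (g d)) S s) :
    IsGlbR (fun f g => ∀ d, le2 U π (f d) (g d))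
      ((fun f => fun d => (tau U π (f d)).1) '' S) (fun d => (tau U π (s d)).1) ∧
    IsGlbR (fun f g => ∀ d, le2 U π (f d) (g d))
      ((fun f => fun d => (tau U π (f d)).2) '' S) (fun d => (tau U π (s d)).2) := by
  have key : ∀ d, IsGlbR (le2 U π) ((fun a => (tau U π a).1) '' ((fun f => f d) '' S))
      (tau U π (s d)).1 ∧ IsGlbR (le2 U π) ((fun a => (tau U π a).2) '' ((fun f => f d) '' S))
      (tau U π (s d)).2 := fun d => ih _ _ (glb_pt _ S s h d)
  constructor
  · apply glb_assemble
    intro d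
    have := (key d).1
    rw [Set.image_image] at this
    rw [Set.image_image]
    exact this
  · apply glb_assemble
    intro d
    have := (key d).2
    rw [Set.image_image] at this
    rw [Set.image_image]
    exact this

lemma arr_prec (π : PTy) (D : Type)
    (ih : ∀ S : Set (sem3 U π), S.Nonempty → ∀ g : sem3 U π, IsGlbR (prec3 U π) S g →
      IsGlbR (le2 U π) ((fun f => (tau U π f).1) '' S) (tau U π g).1 ∧
      IsLubR (le2 U π) ((fun f => (tau U π f).2) '' S) (tau U π g).2)
    (S : Set (D → sem3 U π)) (hne : S.Nonempty) (g : D → sem3 U π)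
    (h : IsGlbR (fun f g => ∀ d, prec3 U π (f d) (g d)) S g) :
    IsGlbR (fun f g => ∀ d, le2 U π (f d) (g d))
      ((fun f => fun d => (tau U π (f d)).1) '' S) (fun d => (tau U π (g d)).1) ∧
    IsLubR (fun f g => ∀ d, le2 U π (f d) (g d))
      ((fun f => fun d => (tau U π (f d)).2) '' S) (fun d => (tau U π (g d)).2) := by
  have key : ∀ d, IsGlbR (le2 U π) ((fun a => (tau U π a).1) '' ((fun f => f d) '' S))
      (tau U π (g d)).1 ∧ IsLubR (le2 U π) ((fun a => (tau U π a).2) '' ((fun f => f d) '' S))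
      (tau U π (g d)).2 := fun d => ih _ (hne.image _) _ (glb_pt _ S g h d)
  constructor
  · apply glb_assemble
    intro d
    have := (key d).1
    rw [Set.image_image] at this
    rw [Set.image_image]
    exact this
  · apply lub_assemble
    intro d
    have := (key d).2
    rw [Set.image_image] at this
    rw [Set.image_image]
    exact this

end Arr


theorem stmt9 (U : Type) (hU : Nonempty U) (π : PTy) :
    (∀ (S : Set (sem3 U π)) (s : sem3 U π), IsLubR (le3 U π) S s →
      IsLubR (le2 U π) ((fun f => (tau U π f).1) '' S) (tau U π s).1 ∧
      IsLubR (le2 U π) ((fun f => (tau U π f).2) '' S) (tau U π s).2) ∧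
    (∀ (S : Set (sem3 U π)) (s : sem3 U π), IsGlbR (le3 U π) S s →
      IsGlbR (le2 U π) ((fun f => (tau U π f).1) '' S) (tau U π s).1 ∧
      IsGlbR (le2 U π) ((fun f => (tau U π f).2) '' S) (tau U π s).2) ∧
    (∀ S : Set (sem3 U π), S.Nonempty → ∀ g : sem3 U π, IsGlbR (prec3 U π) S g →
      IsGlbR (le2 U π) ((fun f => (tau U π f).1) '' S) (tau U π g).1 ∧
      IsLubR (le2 U π) ((fun f => (tau U π f).2) '' S) (tau U π g).2) := by
  induction π with
  | o =>
    exact ⟨fun S s h => o_lub S s h, fun S s h => o_glb S s h,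
      fun S hne g h => o_prec S hne g h⟩
  | arrI π ih =>
    exact ⟨fun S s h => arr_lub U π U ih.1 S s h,
      fun S s h => arr_glb U π U ih.2.1 S s h,
      fun S hne g h => arr_prec U π U ih.2.2 S hne g h⟩
  | arrP ρ π ihρ ih =>
    exact ⟨fun S s h => arr_lub U π (sem2 U ρ) ih.1 S s h,
      fun S s h => arr_glb U π (sem2 U ρ) ih.2.1 S s h,
      fun S hne g h => arr_prec U π (sem2 U ρ) ih.2.2 S hne g h⟩
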